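/- With N, q, and the matrix C_R = C_R(u,v,u′,v′,h) as in the context, suppose u, v, h, u′, v′ are nonzero complex numbers with u^N ≠ −1, (u′)^N = h^N / (u^N·v^N·(1 + u^{−N})²), and (v′)^N = (1 + u^N)²·v^N. Then the matrix C_R is invertible. -/

import Mathlib

open Matrix

/-- The intertwining matrix `C_R(u,v,u′,v′,h)`, with `(i,j)`-entry
`q^{2(j−i)²}·(u′v′/(uh))^{j−i}·(v′/v)^i·∏_{α=1}^{i}[(1+q^{4α−3}u)(1+q^{4α−1}u)]⁻¹`. -/
noncomputable def CR (N : ℕ) (q u v u' v' h : ℂ) : Matrix (Fin N) (Fin N) ℂ :=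
  Matrix.of fun i j =>
    q ^ (2 * ((j : ℤ) - (i : ℤ)) ^ 2) *
      (u' * v' / (u * h)) ^ ((j : ℤ) - (i : ℤ)) *
      (v' / v) ^ (i : ℕ) *
      ∏ α ∈ Finset.range (i : ℕ),
        ((1 + q ^ (4 * α + 1) * u) * (1 + q ^ (4 * α + 3) * u))⁻¹

/-- The matrix `C_R` is invertible. -/
theorem stmt9 (N : ℕ) (hN : Odd N) (hNpos : 0 < N) (q : ℂ) (hq : IsPrimitiveRoot q N)
    (u v h u' v' : ℂ) (hu : u ≠ 0) (hv : v ≠ 0) (hh : h ≠ 0)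
    (hu' : u' ≠ 0) (hv' : v' ≠ 0) (hun : u ^ N ≠ -1)
    (hu'N : u' ^ N = h ^ N / (u ^ N * v ^ N * (1 + (u ^ N)⁻¹) ^ 2))
    (hv'N : v' ^ N = (1 + u ^ N) ^ 2 * v ^ N) :
    IsUnit (CR N q u v u' v' h) := by
  have hq0 : q ≠ 0 := hq.ne_zero hNpos.ne'
  have hqN : q ^ N = 1 := hq.pow_eq_one
  have hNC : (N : ℂ) ≠ 0 := Nat.cast_ne_zero.mpr hNpos.ne'
  -- each factor `1 + q^m u` is nonzero
  have key : ∀ m : ℕ, 1 + q ^ m * u ≠ 0 := by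
    intro m heq
    apply hun
    have h1 : q ^ m * u = -1 := by linear_combination heq
    have h2 : (q ^ m * u) ^ N = (-1 : ℂ) ^ N := by rw [h1]
    rwa [mul_pow, ← pow_mul, mul_comm m N, pow_mul, hqN, one_pow, one_mul,
      hN.neg_one_pow] at h2
  set a : ℂ := u' * v' / (u * h) with ha
  have ha0 : a ≠ 0 := div_ne_zero (mul_ne_zero hu' hv') (mul_ne_zero hu hh)
  -- the Gaussian circulant
  set Q : Matrix (Fin N) (Fin N) ℂ :=
    Matrix.of (fun i j => q ^ (2 * ((j : ℤ) - (i : ℤ)) ^ 2)) with hQdef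
  set B : Matrix (Fin N) (Fin N) ℂ :=
    Matrix.of (fun i j => (N : ℂ)⁻¹ * q ^ (-(2 * ((j : ℤ) - (i : ℤ)) ^ 2))) with hBdef
  have hQB : Q * B = 1 := by
    ext i j
    rw [Matrix.mul_apply]
    simp only [hQdef, hBdef, Matrix.of_apply]
    have hterm : ∀ k : Fin N,
        q ^ (2 * ((k : ℤ) - (i : ℤ)) ^ 2) *
          ((N : ℂ)⁻¹ * q ^ (-(2 * ((j : ℤ) - (k : ℤ)) ^ 2)))
        = ((N : ℂ)⁻¹ * q ^ (2 * ((i : ℤ) ^ 2 - (j : ℤ) ^ 2))) *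
            (q ^ (4 * ((j : ℤ) - (i : ℤ)))) ^ (k : ℕ) := by
      intro k
      rw [← zpow_natCast (q ^ (4 * ((j : ℤ) - (i : ℤ)))), ← _root_.zpow_mul]
      have e1 : q ^ (2 * ((k : ℤ) - (i : ℤ)) ^ 2) * q ^ (-(2 * ((j : ℤ) - (k : ℤ)) ^ 2))
          = q ^ (2 * ((i : ℤ) ^ 2 - (j : ℤ) ^ 2)) * q ^ (4 * ((j : ℤ) - (i : ℤ)) * (k : ℤ)) := by
        rw [← zpow_add₀ hq0, ← zpow_add₀ hq0]
        congr 1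
        ring
      calc q ^ (2 * ((k : ℤ) - (i : ℤ)) ^ 2) *
            ((N : ℂ)⁻¹ * q ^ (-(2 * ((j : ℤ) - (k : ℤ)) ^ 2)))
          = (N : ℂ)⁻¹ * (q ^ (2 * ((k : ℤ) - (i : ℤ)) ^ 2) *
              q ^ (-(2 * ((j : ℤ) - (k : ℤ)) ^ 2))) := by ring
        _ = (N : ℂ)⁻¹ * q ^ (2 * ((i : ℤ) ^ 2 - (j : ℤ) ^ 2)) *
              q ^ (4 * ((j : ℤ) - (i : ℤ)) * (k : ℤ)) := by rw [e1]; ring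
    rw [Finset.sum_congr rfl fun k _ => hterm k, ← Finset.mul_sum]
    rw [Fin.sum_univ_eq_sum_range (fun k => (q ^ (4 * ((j : ℤ) - (i : ℤ)))) ^ k) N]
    by_cases hij : i = j
    · subst hij
      simp only [sub_self, mul_zero, zpow_zero, one_pow, Finset.sum_const,
        Finset.card_range, nsmul_eq_mul, mul_one]
      rw [Matrix.one_apply_eq]
      field_simp
    · have hzeta : (q ^ (4 * ((j : ℤ) - (i : ℤ)))) ≠ 1 := by
        intro hone
        have hdvd : (N : ℤ) ∣ 4 * ((j : ℤ) - (i : ℤ)) :=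
          (hq.zpow_eq_one_iff_dvd _).mp hone
        have hcop : IsCoprime (N : ℤ) 4 := by
          have h2 : Nat.Coprime N 4 := by
            have := (hN.coprime_two_right).pow_right 2
            simpa using this
          exact_mod_cast h2.isCoprime
        have hdvd' : (N : ℤ) ∣ ((j : ℤ) - (i : ℤ)) :=
          hcop.dvd_of_dvd_mul_left hdvd
        have hz : ((j : ℤ) - (i : ℤ)) = 0 := by
          refine Int.eq_zero_of_abs_lt_dvd hdvd' ?_
          have h1 : (i : ℤ) < N := by exact_mod_cast i.isLt
          have h2 : (j : ℤ) < N := by exact_mod_cast j.isLt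
          have h3 : (0 : ℤ) ≤ i := by positivity
          have h4 : (0 : ℤ) ≤ j := by positivity
          rw [abs_lt]; omega
        apply hij
        have : (i : ℤ) = (j : ℤ) := by omega
        exact Fin.ext (by exact_mod_cast this)
      have hzN : (q ^ (4 * ((j : ℤ) - (i : ℤ)))) ^ N = 1 := by
        rw [← zpow_natCast (q ^ (4 * ((j : ℤ) - (i : ℤ)))), ← _root_.zpow_mul,
          mul_comm (4 * ((j : ℤ) - (i : ℤ))) ((N : ℕ) : ℤ),
          _root_.zpow_mul, zpow_natCast, hqN, _root_.one_zpow]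
      rw [geom_sum_eq hzeta, hzN, sub_self, zero_div, mul_zero,
        Matrix.one_apply_ne hij]
  have hQunit : IsUnit Q := (Matrix.isUnit_iff_isUnit_det Q).mpr (Matrix.isUnit_det_of_right_inverse hQB)
  -- diagonal factors
  set dL : Fin N → ℂ := fun i =>
    (v' / v) ^ (i : ℕ) *
      (∏ α ∈ Finset.range (i : ℕ),
        ((1 + q ^ (4 * α + 1) * u) * (1 + q ^ (4 * α + 3) * u))⁻¹) *
      a ^ (-(i : ℤ)) with hdL
  set dR : Fin N → ℂ := fun j => a ^ ((j : ℤ)) with hdR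
  have hdecomp : CR N q u v u' v' h = Matrix.diagonal dL * Q * Matrix.diagonal dR := by
    ext i j
    simp only [Matrix.mul_diagonal, Matrix.diagonal_mul, hdL, hdR, hQdef,
      Matrix.of_apply, CR]
    rw [zpow_sub₀ ha0, _root_.zpow_neg]
    ring
  rw [hdecomp]
  have hdL0 : ∀ i, dL i ≠ 0 := by
    intro i
    apply mul_ne_zero
    apply mul_ne_zero
    · exact pow_ne_zero _ (div_ne_zero hv' hv)
    · rw [Finset.prod_ne_zero_iff]
      intro α _
      exact inv_ne_zero (mul_ne_zero (key _) (key _))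
    · exact zpow_ne_zero _ ha0
  have hDL : IsUnit (Matrix.diagonal dL) := by
    rw [Matrix.isUnit_iff_isUnit_det, Matrix.det_diagonal]
    exact isUnit_iff_ne_zero.mpr (Finset.prod_ne_zero_iff.mpr fun i _ => hdL0 i)
  have hDR : IsUnit (Matrix.diagonal dR) := by
    rw [Matrix.isUnit_iff_isUnit_det, Matrix.det_diagonal]
    exact isUnit_iff_ne_zero.mpr
      (Finset.prod_ne_zero_iff.mpr fun i _ => zpow_ne_zero _ ha0)
  exact (hDL.mul hQunit).mul hDR
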